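/- Let D be an STS_2(v) with v ≥ 7 invariant under A_{v,f}, and let P be a 1-dimensional subspace of the eigenspace F of A_{v,f} for eigenvalue 1. Then the number of blocks of D passing through P that are not pointwise fixed by A_{v,f} equals (2^{v-1} - 2^{f-1})/3. -/

import Mathlib

set_option maxHeartbeats 1000000
set_option synthInstance.maxHeartbeats 400000


/-- The action of a matrix `A` on subspaces of `GF(2)^v`, induced by the
right action `x ↦ x ⬝ A` on vectors. -/
def mapMat {v : ℕ} (A : Matrix (Fin v) (Fin v) (ZMod 2))
    (W : Submodule (ZMod 2) (Fin v → ZMod 2)) : Submodule (ZMod 2) (Fin v → ZMod 2) :=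
  W.map A.vecMulLinear

/-- A binary q-Steiner triple system `STS_2(v)`. -/
def IsSTS (v : ℕ) (D : Set (Submodule (ZMod 2) (Fin v → ZMod 2))) : Prop :=
  (∀ B ∈ D, Module.finrank (ZMod 2) B = 3) ∧
  ∀ L : Submodule (ZMod 2) (Fin v → ZMod 2), Module.finrank (ZMod 2) L = 2 →
    ∃! B, B ∈ D ∧ L ≤ B

/-- The block-diagonal matrix `A_{v,f}` over `GF(2)`: `(v-f)/2` consecutive 2×2 blocks
`[[0,1],[1,1]]` on the diagonal, followed by the `f×f` identity matrix. -/
def Avf (v f : ℕ) : Matrix (Fin v) (Fin v) (ZMod 2) :=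
  Matrix.of fun i j =>
    if (i : ℕ) < v - f then
      if (i : ℕ) % 2 = 0 then (if (j : ℕ) = (i : ℕ) + 1 then 1 else 0)
      else (if (j : ℕ) = (i : ℕ) - 1 ∨ (j : ℕ) = (i : ℕ) then 1 else 0)
    else (if j = i then 1 else 0)

/-- A subspace is pointwise fixed by `A` if every 1-dimensional subspace of it is
fixed by `A`. -/
def PointwiseFixed {v : ℕ} (A : Matrix (Fin v) (Fin v) (ZMod 2))
    (E : Submodule (ZMod 2) (Fin v → ZMod 2)) : Prop :=
  ∀ P : Submodule (ZMod 2) (Fin v → ZMod 2),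
    Module.finrank (ZMod 2) P = 1 → P ≤ E → mapMat A P = P

/-- The eigenspace of `A` (acting by `x ↦ x ⬝ A`) for the eigenvalue `1`. -/
def eigOne {v : ℕ} (A : Matrix (Fin v) (Fin v) (ZMod 2)) :
    Submodule (ZMod 2) (Fin v → ZMod 2) :=
  LinearMap.ker (A.vecMulLinear - LinearMap.id)


open Module Submodule

abbrev Subv (v : ℕ) := Submodule (ZMod 2) (Fin v → ZMod 2)

instance {v : ℕ} : Finite (Subv v) :=
  Finite.of_injective (fun W => (W : Set (Fin v → ZMod 2))) SetLike.coe_injective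

lemma zmem_span_singleton {M : Type*} [AddCommGroup M] [Module (ZMod 2) M]
    {x y : M} : y ∈ Submodule.span (ZMod 2) {x} ↔ y = 0 ∨ y = x := by
  rw [Submodule.mem_span_singleton]
  constructor
  · rintro ⟨c, rfl⟩
    fin_cases c
    · exact Or.inl (zero_smul _ x)
    · exact Or.inr (one_smul _ x)
  · rintro (rfl | rfl)
    · exact ⟨0, by simp⟩
    · exact ⟨1, by simp⟩

lemma exists_gen {M : Type*} [AddCommGroup M] [Module (ZMod 2) M]
    [Module.Finite (ZMod 2) M]
    (P : Submodule (ZMod 2) M) (hP : Module.finrank (ZMod 2) P = 1) :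
    ∃ p : M, p ≠ 0 ∧ P = Submodule.span (ZMod 2) {p} := by
  have hbot : P ≠ ⊥ := by
    intro h
    rw [h, finrank_bot] at hP
    omega
  obtain ⟨p, hpP, hp0⟩ := Submodule.exists_mem_ne_zero_of_ne_bot hbot
  refine ⟨p, hp0, ?_⟩
  have hle : Submodule.span (ZMod 2) {p} ≤ P := by
    rw [Submodule.span_le]; simpa using hpP
  have := finrank_span_singleton (K := ZMod 2) hp0
  exact (Submodule.eq_of_le_of_finrank_eq hle (by rw [this, hP])).symm

lemma finrank_sup_span {v : ℕ} (P : Subv v) (hP : Module.finrank (ZMod 2) P = 1)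
    {x : Fin v → ZMod 2} (hx : x ∉ P) :
    Module.finrank (ZMod 2) ↥(P ⊔ Submodule.span (ZMod 2) {x}) = 2 := by
  have hx0 : x ≠ 0 := fun h => hx (h ▸ P.zero_mem)
  have hinf : P ⊓ Submodule.span (ZMod 2) {x} = ⊥ := by
    rw [eq_bot_iff]
    rintro y ⟨hyP, hyx⟩
    rcases zmem_span_singleton.mp hyx with rfl | rfl
    · simp
    · exact absurd hyP hx
  have := Submodule.finrank_sup_add_finrank_inf_eq P (Submodule.span (ZMod 2) {x})
  rw [hinf, finrank_bot, hP, finrank_span_singleton hx0] at this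
  omega
open Module Submodule

lemma card_fiber_mul {α β : Type*} [Finite α] [Finite β] (g : α → β) (n : ℕ)
    (h : ∀ b : β, Nat.card {a // g a = b} = n) : Nat.card α = n * Nat.card β := by
  classical
  have := Fintype.ofFinite α
  have := Fintype.ofFinite β
  letI : ∀ b : β, Fintype {a // g a = b} := fun b => Fintype.ofFinite _
  rw [← Nat.card_congr (Equiv.sigmaFiberEquiv g), Nat.card_eq_fintype_card,
    Fintype.card_sigma]
  have hc : ∀ b : β, Fintype.card {a // g a = b} = n := by
    intro b; rw [← Nat.card_eq_fintype_card, h b]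
  simp [hc, Finset.sum_const, Nat.card_eq_fintype_card, mul_comm]

lemma card_submodule {v : ℕ} (W : Submodule (ZMod 2) (Fin v → ZMod 2)) :
    Nat.card W = 2 ^ Module.finrank (ZMod 2) W := by
  classical
  have := Fintype.ofFinite W
  rw [Nat.card_eq_fintype_card, card_eq_pow_finrank (K := ZMod 2) (V := W), ZMod.card]

lemma card_lines {v : ℕ} (P W : Subv v) (hP : Module.finrank (ZMod 2) P = 1)
    (hPW : P ≤ W) :
    Nat.card {L : Subv v | Module.finrank (ZMod 2) L = 2 ∧ P ≤ L ∧ L ≤ W}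
      = 2 ^ (Module.finrank (ZMod 2) W - 1) - 1 := by
  classical
  obtain ⟨p, hp0, hPp⟩ := exists_gen P hP
  have hpP : p ∈ P := hPp ▸ Submodule.mem_span_singleton_self p
  set Lset := {L : Subv v | Module.finrank (ZMod 2) L = 2 ∧ P ≤ L ∧ L ≤ W} with hLset
  set X := {x : Fin v → ZMod 2 // x ∈ W ∧ x ∉ P} with hX
  have hmem : ∀ x : X, (P ⊔ Submodule.span (ZMod 2) {x.1}) ∈ Lset := by
    rintro ⟨x, hxW, hxP⟩
    refine ⟨finrank_sup_span P hP hxP, le_sup_left, sup_le hPW ?_⟩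
    rw [Submodule.span_le]; simpa using hxW
  set g : X → ↥Lset := fun x => ⟨P ⊔ Submodule.span (ZMod 2) {x.1}, hmem x⟩ with hg
  have hfib : ∀ L : ↥Lset, Nat.card {a : X // g a = L} = 2 := by
    rintro ⟨L, hL2, hPL, hLW⟩
    -- pick x₀ ∈ L \ P
    have hPneL : P ≠ L := fun h => by rw [← h, hP] at hL2; omega
    obtain ⟨x₀, hx₀L, hx₀P⟩ := SetLike.exists_of_lt (lt_of_le_of_ne hPL hPneL)
    have key : ∀ y : Fin v → ZMod 2, y ∉ P → (P ⊔ Submodule.span (ZMod 2) {y} = L ↔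
        (y = x₀ ∨ y = x₀ + p)) := by
      intro y hyP
      constructor
      · intro hy
        have hyL : y ∈ L := hy ▸ Submodule.mem_sup_right (Submodule.mem_span_singleton_self y)
        have hLx : L = P ⊔ Submodule.span (ZMod 2) {x₀} := by
          refine (Submodule.eq_of_le_of_finrank_eq
            (sup_le hPL (by rw [Submodule.span_le]; simpa using hx₀L)) ?_).symm
          rw [finrank_sup_span P hP hx₀P, hL2]
        rw [hLx] at hyL
        obtain ⟨a, haP, b, hb, hab⟩ := Submodule.mem_sup.mp hyL
        rw [hPp] at haP
        rcases zmem_span_singleton.mp haP with ha | ha <;>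
          rcases zmem_span_singleton.mp hb with hbb | hbb
        · rw [ha, hbb] at hab; exact absurd (hab ▸ P.zero_mem) hyP
        · left; rw [← hab, ha, hbb, zero_add]
        · rw [ha, hbb] at hab; simp only [add_zero] at hab; exact absurd (hab ▸ hpP) hyP
        · right; rw [← hab, ha, hbb, add_comm]
      · have hx₀pP : x₀ + p ∉ P := fun h => hx₀P (by simpa using P.add_mem h (P.neg_mem hpP))
        have hx₀pL : x₀ + p ∈ L := L.add_mem hx₀L (hPL hpP)
        rintro (rfl | rfl)
        · exact Submodule.eq_of_le_of_finrank_eq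
            (sup_le hPL (by rw [Submodule.span_le]; simpa using hx₀L))
            (by rw [finrank_sup_span P hP hx₀P, hL2])
        · exact Submodule.eq_of_le_of_finrank_eq
            (sup_le hPL (by rw [Submodule.span_le]; simpa using hx₀pL))
            (by rw [finrank_sup_span P hP hyP, hL2])
    have e : {a : X // g a = ⟨L, hL2, hPL, hLW⟩} ≃
        {y : Fin v → ZMod 2 // (y ∈ W ∧ y ∉ P) ∧ (y = x₀ ∨ y = x₀ + p)} := by
      refine ⟨fun a => ⟨a.1.1, a.1.2, (key a.1.1 a.1.2.2).mp (congrArg Subtype.val a.2)⟩,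
        fun y => ⟨⟨y.1, y.2.1⟩, Subtype.ext ((key y.1 y.2.1.2).mpr y.2.2)⟩, ?_, ?_⟩ <;>
        intro a <;> rfl
    rw [Nat.card_congr e]
    have hset : {y : Fin v → ZMod 2 | (y ∈ W ∧ y ∉ P) ∧ (y = x₀ ∨ y = x₀ + p)}
        = {x₀, x₀ + p} := by
      ext y
      constructor
      · rintro ⟨_, h⟩; exact h
      · have hx₀pP : x₀ + p ∉ P := fun h => hx₀P (by simpa using P.add_mem h (P.neg_mem hpP))
        have hx₀pL : x₀ + p ∈ L := L.add_mem hx₀L (hPL hpP)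
        rintro (rfl | rfl)
        · exact ⟨⟨hLW hx₀L, hx₀P⟩, Or.inl rfl⟩
        · exact ⟨⟨hLW hx₀pL, hx₀pP⟩, Or.inr rfl⟩
    have hne : x₀ ≠ x₀ + p := fun h => hp0 (by simpa using h.symm)
    rw [show {y : Fin v → ZMod 2 // (y ∈ W ∧ y ∉ P) ∧ (y = x₀ ∨ y = x₀ + p)}
      = ↥{y : Fin v → ZMod 2 | (y ∈ W ∧ y ∉ P) ∧ (y = x₀ ∨ y = x₀ + p)} from rfl,
      Nat.card_coe_set_eq, hset, Set.ncard_pair hne]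
  have hcount := card_fiber_mul g 2 hfib
  have hXcard : Nat.card X = 2 ^ Module.finrank (ZMod 2) W - 2 := by
    have : X = ↥((W : Set (Fin v → ZMod 2)) \ (P : Set (Fin v → ZMod 2))) := rfl
    rw [this, Nat.card_coe_set_eq, Set.ncard_diff (by exact_mod_cast hPW) (Set.toFinite _),
      ← Nat.card_coe_set_eq, ← Nat.card_coe_set_eq]
    rw [show Nat.card ↥(W : Set (Fin v → ZMod 2)) = Nat.card W from rfl,
      show Nat.card ↥(P : Set (Fin v → ZMod 2)) = Nat.card P from rfl,
      card_submodule, card_submodule, hP, pow_one]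
  have hW1 : 1 ≤ Module.finrank (ZMod 2) W := by
    have := Submodule.finrank_mono hPW
    omega
  have hpow : 2 ^ Module.finrank (ZMod 2) W = 2 * 2 ^ (Module.finrank (ZMod 2) W - 1) := by
    rw [← pow_succ']
    congr 1
    omega
  rw [hXcard, hpow] at hcount
  rw [show Nat.card ↥Lset = Nat.card Lset from rfl] at hcount ⊢
  omega


variable {v f : ℕ}

lemma vecMul_Avf_even (hvf : (v - f) % 2 = 0) (x : Fin v → ZMod 2) (j : Fin v)
    (hj : (j : ℕ) < v - f) (hje : (j : ℕ) % 2 = 0) (hj1 : (j : ℕ) + 1 < v) :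
    Matrix.vecMul x (Avf v f) j = x ⟨(j : ℕ) + 1, hj1⟩ := by
  rw [Matrix.vecMul, dotProduct]
  rw [Finset.sum_eq_single (⟨(j : ℕ) + 1, hj1⟩ : Fin v)]
  · have h1 : ((j : ℕ) + 1) < v - f := by omega
    have h2 : ((j : ℕ) + 1) % 2 = 1 := by omega
    simp only [Avf, Matrix.of_apply]
    rw [if_pos h1, if_neg (by omega)]
    rw [if_pos (by omega : (j:ℕ) = ((j:ℕ)+1) - 1 ∨ (j:ℕ) = (j:ℕ)+1)]
    ring
  · intro i _ hi
    have hne : (i : ℕ) ≠ (j : ℕ) + 1 := fun h => hi (Fin.ext h)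
    simp only [Avf, Matrix.of_apply]
    by_cases h1 : (i : ℕ) < v - f
    · rw [if_pos h1]
      by_cases h2 : (i : ℕ) % 2 = 0
      · rw [if_pos h2, if_neg (by omega), mul_zero]
      · rw [if_neg h2, if_neg (by omega), mul_zero]
    · rw [if_neg h1, if_neg (by intro h; rw [h] at hj; omega), mul_zero]
  · intro h; exact absurd (Finset.mem_univ _) h

lemma vecMul_Avf_odd (hvf : (v - f) % 2 = 0) (x : Fin v → ZMod 2) (j : Fin v)
    (hj : (j : ℕ) < v - f) (hje : (j : ℕ) % 2 = 1) (hj1 : (j : ℕ) - 1 < v) :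
    Matrix.vecMul x (Avf v f) j = x ⟨(j : ℕ) - 1, hj1⟩ + x j := by
  rw [Matrix.vecMul, dotProduct]
  have hj0 : 1 ≤ (j : ℕ) := by omega
  set i₀ : Fin v := ⟨(j : ℕ) - 1, hj1⟩ with hi₀
  have hne : i₀ ≠ j := by
    intro h
    have := congrArg Fin.val h
    simp only [hi₀] at this
    omega
  have hsub : ∑ i, x i * (Avf v f) i j = ∑ i ∈ ({i₀, j} : Finset (Fin v)), x i * (Avf v f) i j := by
    refine (Finset.sum_subset (Finset.subset_univ _) ?_).symm
    intro i _ hi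
    simp only [Finset.mem_insert, Finset.mem_singleton, not_or] at hi
    obtain ⟨hne1, hne2⟩ := hi
    have hv1 : (i : ℕ) ≠ (j : ℕ) - 1 := fun h => hne1 (Fin.ext (by simpa [hi₀] using h))
    have hv2 : (i : ℕ) ≠ (j : ℕ) := fun h => hne2 (Fin.ext h)
    simp only [Avf, Matrix.of_apply]
    by_cases h1 : (i : ℕ) < v - f
    · rw [if_pos h1]
      by_cases h2 : (i : ℕ) % 2 = 0
      · rw [if_pos h2, if_neg (by omega), mul_zero]
      · rw [if_neg h2, if_neg (by omega), mul_zero]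
    · rw [if_neg h1, if_neg (by intro h; rw [h] at hj; omega), mul_zero]
  rw [hsub, Finset.sum_pair hne]
  have e0 : (Avf v f) i₀ j = 1 := by
    simp only [Avf, Matrix.of_apply, hi₀]
    rw [if_pos (by omega : (j:ℕ) - 1 < v - f), if_pos (by omega : ((j:ℕ)-1) % 2 = 0),
      if_pos (by omega : (j:ℕ) = (j:ℕ) - 1 + 1)]
  have e1 : (Avf v f) j j = 1 := by
    simp only [Avf, Matrix.of_apply]
    rw [if_pos hj, if_neg (by omega)]
    simp
  rw [e0, e1, mul_one, mul_one]

lemma vecMul_Avf_hi (hvf : (v - f) % 2 = 0) (x : Fin v → ZMod 2) (j : Fin v)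
    (hj : ¬ (j : ℕ) < v - f) :
    Matrix.vecMul x (Avf v f) j = x j := by
  rw [Matrix.vecMul, dotProduct]
  rw [Finset.sum_eq_single j]
  · simp only [Avf, Matrix.of_apply]
    rw [if_neg (by omega)]
    simp
  · intro i _ hi
    have hv : (i : ℕ) ≠ (j : ℕ) := fun h => hi (Fin.ext h)
    simp only [Avf, Matrix.of_apply]
    by_cases h1 : (i : ℕ) < v - f
    · rw [if_pos h1]
      by_cases h2 : (i : ℕ) % 2 = 0
      · rw [if_pos h2, if_neg (by omega), mul_zero]
      · rw [if_neg h2, if_neg (by omega), mul_zero]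
    · rw [if_neg h1, if_neg (fun h => hv (congrArg Fin.val h.symm)), mul_zero]
  · intro h; exact absurd (Finset.mem_univ _) h

lemma mem_eigOne_iff' {v : ℕ} (A : Matrix (Fin v) (Fin v) (ZMod 2)) (x : Fin v → ZMod 2) :
    x ∈ eigOne A ↔ Matrix.vecMul x A = x := by
  rw [eigOne, LinearMap.mem_ker, LinearMap.sub_apply, LinearMap.id_apply, sub_eq_zero,
    Matrix.vecMulLinear_apply]

lemma mem_eigOne_iff (hvf : (v - f) % 2 = 0) (x : Fin v → ZMod 2) :
    x ∈ eigOne (Avf v f) ↔ ∀ i : Fin v, (i : ℕ) < v - f → x i = 0 := by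
  rw [mem_eigOne_iff']
  constructor
  · intro h i hi
    have heven : ∀ i : Fin v, (i : ℕ) < v - f → (i : ℕ) % 2 = 0 → x i = 0 := by
      intro i hi hie
      have hi1 : (i : ℕ) + 1 < v - f := by omega
      have hi1v : (i : ℕ) + 1 < v := by omega
      have heq := congrFun h ⟨(i : ℕ) + 1, hi1v⟩
      rw [vecMul_Avf_odd hvf x _ (by simpa using hi1) (by simp only [Fin.val_mk]; omega) (by simp only [Fin.val_mk]; omega)] at heq
      have h3 : x ⟨(i:ℕ) + 1 - 1, by omega⟩ + x ⟨(i:ℕ)+1, hi1v⟩ = x ⟨(i:ℕ)+1, hi1v⟩ := heq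
      have h4 : x ⟨(i:ℕ) + 1 - 1, by omega⟩ = 0 :=
        add_right_cancel (h3.trans (zero_add (x ⟨(i:ℕ)+1, hi1v⟩)).symm)
      have h5 : (⟨(i:ℕ)+1-1, by omega⟩ : Fin v) = i := Fin.ext (by simp)
      rwa [h5] at h4
    by_cases hie : (i : ℕ) % 2 = 0
    · exact heven i hi hie
    · have hi1 : (i : ℕ) - 1 < v - f := by omega
      have hi1v : (i : ℕ) - 1 < v := by omega
      have heq := congrFun h ⟨(i : ℕ) - 1, hi1v⟩
      rw [vecMul_Avf_even hvf x _ (by simpa using hi1) (by simp only [Fin.val_mk]; omega) (by simp only [Fin.val_mk]; omega)] at heq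
      have h0 : x ⟨(i : ℕ) - 1, hi1v⟩ = 0 := heven _ (by simpa using hi1) (by simp only [Fin.val_mk]; omega)
      have h3 : x ⟨(i:ℕ) - 1 + 1, by omega⟩ = x ⟨(i:ℕ)-1, hi1v⟩ := heq
      have h5 : (⟨(i:ℕ)-1+1, by omega⟩ : Fin v) = i := Fin.ext (by simp only [Fin.val_mk]; omega)
      rw [h5, h0] at h3
      exact h3
  · intro h
    funext j
    by_cases hj : (j : ℕ) < v - f
    · by_cases hje : (j : ℕ) % 2 = 0
      · rw [vecMul_Avf_even hvf x j hj hje (by omega)]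
        rw [h _ (by simp only [Fin.val_mk]; omega), h _ hj]
      · rw [vecMul_Avf_odd hvf x j hj (by omega) (by omega)]
        rw [h _ (by simp only [Fin.val_mk]; omega), h _ hj, add_zero]
    · exact vecMul_Avf_hi hvf x j hj

lemma finrank_eigOne (hfv : f ≤ v) (hvf : (v - f) % 2 = 0) :
    Module.finrank (ZMod 2) (eigOne (Avf v f)) = f := by
  classical
  set φ : (Fin v → ZMod 2) →ₗ[ZMod 2] (Fin (v - f) → ZMod 2) :=
    LinearMap.funLeft (ZMod 2) (ZMod 2) (Fin.castLE (by omega)) with hφ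
  have hker : eigOne (Avf v f) = LinearMap.ker φ := by
    ext x
    rw [mem_eigOne_iff hvf, LinearMap.mem_ker]
    constructor
    · intro h
      funext i
      exact h (Fin.castLE (by omega) i) (by simpa using i.2)
    · intro h i hi
      have := congrFun h ⟨(i : ℕ), hi⟩
      simpa [hφ, LinearMap.funLeft_apply, Fin.castLE, Fin.ext_iff] using this
  have hsurj : Function.Surjective φ :=
    LinearMap.funLeft_surjective_of_injective (ZMod 2) (ZMod 2) _
      (Fin.castLE_injective (by omega))
  have h1 := LinearMap.finrank_range_add_finrank_ker φ
  rw [LinearMap.range_eq_top.mpr hsurj, finrank_top, Module.finrank_fin_fun,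
    Module.finrank_fin_fun, ← hker] at h1
  omega

lemma vecMul_Avf_three (hvf : (v - f) % 2 = 0) (x : Fin v → ZMod 2) :
    Matrix.vecMul (Matrix.vecMul (Matrix.vecMul x (Avf v f)) (Avf v f)) (Avf v f) = x := by
  have key : ∀ a b : ZMod 2, a + (b + a) = b := by decide
  set A := Avf v f with hA
  set y := Matrix.vecMul x A with hy
  set z := Matrix.vecMul y A with hz
  funext j
  by_cases hj : (j : ℕ) < v - f
  · by_cases hje : (j : ℕ) % 2 = 0
    · -- even j
      have hj1f : (j : ℕ) + 1 < v - f := by omega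
      have hj1v : (j : ℕ) + 1 < v := by omega
      set j1 : Fin v := ⟨(j : ℕ) + 1, hj1v⟩ with hj1
      have hj1val : (j1 : ℕ) = (j : ℕ) + 1 := rfl
      have hj1o : (j1 : ℕ) % 2 = 1 := by omega
      have hCz : (j1 : ℕ) - 1 < v := by omega
      have e1 : Matrix.vecMul z A j = z j1 := vecMul_Avf_even hvf z j hj hje hj1v
      have e2 : z j1 = y ⟨(j1 : ℕ) - 1, hCz⟩ + y j1 :=
        vecMul_Avf_odd hvf y j1 (by omega) hj1o hCz
      have hidx : (⟨(j1 : ℕ) - 1, hCz⟩ : Fin v) = j := Fin.ext (by simp [hj1val])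
      rw [hidx] at e2
      have e3 : y j = x j1 := vecMul_Avf_even hvf x j hj hje hj1v
      have e4 : y j1 = x ⟨(j1 : ℕ) - 1, hCz⟩ + x j1 :=
        vecMul_Avf_odd hvf x j1 (by omega) hj1o hCz
      rw [hidx] at e4
      rw [e1, e2, e3, e4, key]
    · -- odd j
      have hj0 : 1 ≤ (j : ℕ) := by omega
      have hjm : (j : ℕ) - 1 < v := by omega
      have e1 : Matrix.vecMul z A j = z ⟨(j : ℕ) - 1, hjm⟩ + z j :=
        vecMul_Avf_odd hvf z j hj (by omega) hjm
      set jm : Fin v := ⟨(j : ℕ) - 1, hjm⟩ with hjmdef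
      have hjmval : (jm : ℕ) = (j : ℕ) - 1 := rfl
      have hjme : (jm : ℕ) % 2 = 0 := by omega
      have hjmf : (jm : ℕ) < v - f := by omega
      have hjmp1 : (jm : ℕ) + 1 < v := by omega
      have hidx : (⟨(jm : ℕ) + 1, hjmp1⟩ : Fin v) = j := Fin.ext (by simp [hjmval]; omega)
      have e2 : z jm = y ⟨(jm : ℕ) + 1, hjmp1⟩ := vecMul_Avf_even hvf y jm hjmf hjme hjmp1
      rw [hidx] at e2
      have e3 : z j = y jm + y j := vecMul_Avf_odd hvf y j hj (by omega) hjm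
      have e4 : y jm = x ⟨(jm : ℕ) + 1, hjmp1⟩ := vecMul_Avf_even hvf x jm hjmf hjme hjmp1
      rw [hidx] at e4
      have e5 : y j = x jm + x j := vecMul_Avf_odd hvf x j hj (by omega) hjm
      rw [e1, e2, e3, e4, e5, key]
  · rw [vecMul_Avf_hi hvf z j hj, hz, vecMul_Avf_hi hvf y j hj, hy,
      vecMul_Avf_hi hvf x j hj]

-- MARKER structural

lemma vecMul_Avf_inj {v f : ℕ} (hvf : (v - f) % 2 = 0) {a b : Fin v → ZMod 2}
    (hab : Matrix.vecMul a (Avf v f) = Matrix.vecMul b (Avf v f)) : a = b := by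
  have ha := vecMul_Avf_three hvf a
  have hb := vecMul_Avf_three hvf b
  rw [hab] at ha
  exact ha.symm.trans hb

lemma mapMat_span {v : ℕ} (A : Matrix (Fin v) (Fin v) (ZMod 2)) (x : Fin v → ZMod 2) :
    mapMat A (Submodule.span (ZMod 2) {x}) = Submodule.span (ZMod 2) {Matrix.vecMul x A} := by
  rw [mapMat, Submodule.map_span, Set.image_singleton, Matrix.vecMulLinear_apply]

lemma fixed_iff {v f : ℕ} (hvf : (v - f) % 2 = 0) (B : Submodule (ZMod 2) (Fin v → ZMod 2)) :
    PointwiseFixed (Avf v f) B ↔ B ≤ eigOne (Avf v f) := by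
  constructor
  · intro hpf x hxB
    rw [mem_eigOne_iff']
    by_cases hx0 : x = 0
    · rw [hx0, Matrix.zero_vecMul]
    · have hsp : Submodule.span (ZMod 2) {x} ≤ B := by
        rw [Submodule.span_le]; simpa using hxB
      have h1 := hpf _ (finrank_span_singleton hx0) hsp
      rw [mapMat_span] at h1
      have hmem : Matrix.vecMul x (Avf v f) ∈ Submodule.span (ZMod 2) {x} := by
        rw [← h1]; exact Submodule.mem_span_singleton_self _
      rcases zmem_span_singleton.mp hmem with h | h
      · exfalso
        apply hx0
        have := vecMul_Avf_three hvf x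
        rw [h, Matrix.zero_vecMul, Matrix.zero_vecMul] at this
        exact this.symm
      · exact h
  · intro hBF Q hQ1 hQB
    obtain ⟨q, hq0, rfl⟩ := exists_gen Q hQ1
    rw [mapMat_span]
    have : Matrix.vecMul q (Avf v f) = q := by
      rw [← mem_eigOne_iff']
      exact hBF (hQB (Submodule.mem_span_singleton_self q))
    rw [this]

lemma invariant_block {v f : ℕ} (hvf : (v - f) % 2 = 0)
    {B L : Submodule (ZMod 2) (Fin v → ZMod 2)}
    (hB3 : Module.finrank (ZMod 2) B = 3)
    (hBinv : mapMat (Avf v f) B = B)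
    (hLB : L ≤ B) (hL2 : Module.finrank (ZMod 2) L = 2)
    (hLF : L ≤ eigOne (Avf v f)) : B ≤ eigOne (Avf v f) := by
  classical
  set A := Avf v f with hA
  set N : (Fin v → ZMod 2) →ₗ[ZMod 2] (Fin v → ZMod 2) := A.vecMulLinear - LinearMap.id
    with hN
  have hNapp : ∀ x, N x = Matrix.vecMul x A - x := fun x => by
    simp [hN, Matrix.vecMulLinear_apply]
  have hmemF : ∀ x, x ∈ eigOne A ↔ N x = 0 := by
    intro x
    rw [mem_eigOne_iff', hNapp, sub_eq_zero]
  set ψ : ↥B →ₗ[ZMod 2] (Fin v → ZMod 2) := N.comp B.subtype with hψ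
  have hTB : ∀ x ∈ B, Matrix.vecMul x A ∈ B := by
    intro x hx
    have : Matrix.vecMul x A ∈ mapMat A B := ⟨x, hx, Matrix.vecMulLinear_apply A x⟩
    rwa [hBinv] at this
  have hrange_le : LinearMap.range ψ ≤ B := by
    rintro y ⟨b, rfl⟩
    rw [hψ, LinearMap.comp_apply, hNapp]
    exact B.sub_mem (hTB b.1 b.2) b.2
  have hker_ge : Submodule.comap B.subtype L ≤ LinearMap.ker ψ := by
    intro b hb
    rw [LinearMap.mem_ker, hψ, LinearMap.comp_apply, ← hmemF]
    exact hLF hb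
  have hcomapL : Module.finrank (ZMod 2) (Submodule.comap B.subtype L) = 2 := by
    rw [(Submodule.comapSubtypeEquivOfLe hLB).finrank_eq, hL2]
  have h2le : 2 ≤ Module.finrank (ZMod 2) (LinearMap.ker ψ) := by
    have h := Submodule.finrank_mono hker_ge
    rw [hcomapL] at h
    exact h
  have hrn := LinearMap.finrank_range_add_finrank_ker ψ
  rw [hB3] at hrn
  have hr1 : Module.finrank (ZMod 2) (LinearMap.range ψ) ≤ 1 := by omega
  -- show every b ∈ B satisfies N b = 0
  by_contra hBF
  rw [SetLike.le_def] at hBF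
  push_neg at hBF
  obtain ⟨b, hbB, hbF⟩ := hBF
  set y : Fin v → ZMod 2 := N b with hy
  have hyr : y ∈ LinearMap.range ψ := ⟨⟨b, hbB⟩, rfl⟩
  have hy0 : y ≠ 0 := fun h => hbF ((hmemF b).mpr h)
  have hspan_le : Submodule.span (ZMod 2) {y} ≤ LinearMap.range ψ := by
    rw [Submodule.span_le]; simpa using hyr
  have hreq : LinearMap.range ψ = Submodule.span (ZMod 2) {y} := by
    refine (Submodule.eq_of_le_of_finrank_eq hspan_le ?_).symm
    have := finrank_span_singleton (K := ZMod 2) hy0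
    have h1le : 1 ≤ Module.finrank (ZMod 2) (LinearMap.range ψ) := by
      rw [← this]
      exact Submodule.finrank_mono hspan_le
    omega
  have hyB : y ∈ B := hrange_le hyr
  have hNy : N y ∈ Submodule.span (ZMod 2) {y} := by
    rw [← hreq]; exact ⟨⟨y, hyB⟩, rfl⟩
  have hchar2 : ∀ z : Fin v → ZMod 2, z + z = 0 := by
    intro z
    funext i
    simp only [Pi.add_apply, Pi.zero_apply]
    have : ∀ a : ZMod 2, a + a = 0 := by decide
    exact this (z i)
  rcases zmem_span_singleton.mp hNy with h | h
  · -- N y = 0, i.e. T y = y; and N b = y means T b = b + y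
    have hTy : Matrix.vecMul y A = y := by
      have := (hmemF y).mpr h
      rwa [mem_eigOne_iff'] at this
    have hTb : Matrix.vecMul b A = b + y := by
      have h' : Matrix.vecMul b A - b = y := by rw [← hNapp]
      rw [eq_add_of_sub_eq h', add_comm]
    have hT2b : Matrix.vecMul (Matrix.vecMul b A) A = b := by
      rw [hTb, Matrix.add_vecMul, hTy, hTb, add_assoc, hchar2, add_zero]
    have hT3b := vecMul_Avf_three hvf b
    rw [hT2b] at hT3b
    -- hT3b : vecMul b A = b, so N b = 0, so y = 0
    exact hy0 (by rw [hy, hNapp, hT3b, sub_self])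
  · -- N y = y, i.e. T y = y + y = 0
    have hTy : Matrix.vecMul y A = 0 := by
      have h' : Matrix.vecMul y A - y = y := by rw [← hNapp]; exact h
      rw [eq_add_of_sub_eq h', hchar2]
    have : y = 0 := by
      have h3 := vecMul_Avf_three hvf y
      rw [hTy, Matrix.zero_vecMul, Matrix.zero_vecMul] at h3
      exact h3.symm
    exact hy0 this

/-- For an `STS_2(v)` with `v ≥ 7` invariant under `A_{v,f}` and a point `P` of the
eigenspace of `A_{v,f}` for the eigenvalue 1, the number of blocks through `P` that
are not pointwise fixed by `A_{v,f}` equals `(2^{v-1} - 2^{f-1})/3`. -/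
theorem stmt12 (v f : ℕ) (hv : 7 ≤ v) (hf : f ≤ v - 1) (hvf : Even (v - f))
    (D : Set (Submodule (ZMod 2) (Fin v → ZMod 2))) (hD : IsSTS v D)
    (hinv : (mapMat (Avf v f)) '' D = D)
    (P : Submodule (ZMod 2) (Fin v → ZMod 2))
    (hP : Module.finrank (ZMod 2) P = 1) (hPF : P ≤ eigOne (Avf v f)) :
    Nat.card {B : Submodule (ZMod 2) (Fin v → ZMod 2) |
        B ∈ D ∧ P ≤ B ∧ ¬ PointwiseFixed (Avf v f) B}
      = (2 ^ (v - 1) - 2 ^ (f - 1)) / 3 := by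
  classical
  have hvf2 : (v - f) % 2 = 0 := Nat.even_iff.mp hvf
  have hfv : f ≤ v := by omega
  set F := eigOne (Avf v f) with hFdef
  have hFrank : Module.finrank (ZMod 2) F = f := finrank_eigOne hfv hvf2
  have hf1 : 1 ≤ f := by
    have h := Submodule.finrank_mono hPF
    rw [hP] at h
    omega
  have keyFix : ∀ L : Subv v, Module.finrank (ZMod 2) L = 2 → L ≤ F →
      ∀ B, B ∈ D → L ≤ B → B ≤ F := by
    intro L hL2 hLF B hBD hLB
    have hmapD : mapMat (Avf v f) B ∈ D := by
      rw [← hinv]; exact Set.mem_image_of_mem _ hBD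
    have hLmap : L ≤ mapMat (Avf v f) B := by
      intro x hx
      have hxF : Matrix.vecMul x (Avf v f) = x := by
        rw [← mem_eigOne_iff']; exact hLF hx
      exact ⟨x, hLB hx, by rw [Matrix.vecMulLinear_apply, hxF]⟩
    have hBinv : mapMat (Avf v f) B = B :=
      (hD.2 L hL2).unique ⟨hmapD, hLmap⟩ ⟨hBD, hLB⟩
    exact invariant_block hvf2 (hD.1 B hBD) hBinv hLB hL2 hLF
  set Sb : Set (Subv v) :=
    {B | B ∈ D ∧ P ≤ B ∧ ¬ PointwiseFixed (Avf v f) B} with hSb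
  set Sl : Set (Subv v) :=
    {L | Module.finrank (ZMod 2) L = 2 ∧ P ≤ L ∧ ¬ L ≤ F} with hSl
  have hblkmem : ∀ L : ↥Sl,
      ((hD.2 L.1 L.2.1).exists.choose ∈ D ∧ L.1 ≤ (hD.2 L.1 L.2.1).exists.choose) :=
    fun L => (hD.2 L.1 L.2.1).exists.choose_spec
  have hginSb : ∀ L : ↥Sl, (hD.2 L.1 L.2.1).exists.choose ∈ Sb := by
    intro L
    obtain ⟨hBD, hLB⟩ := hblkmem L
    refine ⟨hBD, le_trans L.2.2.1 hLB, ?_⟩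
    rw [fixed_iff hvf2]
    intro hBF
    exact L.2.2.2 (le_trans hLB hBF)
  set g : ↥Sl → ↥Sb := fun L => ⟨(hD.2 L.1 L.2.1).exists.choose, hginSb L⟩ with hg
  have hfib : ∀ Bs : ↥Sb, Nat.card {L : ↥Sl // g L = Bs} = 3 := by
    rintro ⟨B, hBD, hPB, hBnF⟩
    have hB3 : Module.finrank (ZMod 2) B = 3 := hD.1 B hBD
    have hmemSl : ∀ L : Subv v, Module.finrank (ZMod 2) L = 2 → P ≤ L → L ≤ B → L ∈ Sl := by
      intro L h2 hPL hLB
      refine ⟨h2, hPL, fun hLF => hBnF ?_⟩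
      rw [fixed_iff hvf2]
      exact keyFix L h2 hLF B hBD hLB
    have hgval : ∀ (L : ↥Sl), L.1 ≤ B → g L = ⟨B, hBD, hPB, hBnF⟩ := by
      intro L hLB
      apply Subtype.ext
      exact (hD.2 L.1 L.2.1).unique (hblkmem L) ⟨hBD, hLB⟩
    have e : {L : ↥Sl // g L = ⟨B, hBD, hPB, hBnF⟩} ≃
        ↥{L : Subv v | Module.finrank (ZMod 2) L = 2 ∧ P ≤ L ∧ L ≤ B} :=
      { toFun := fun L => ⟨L.1.1, L.1.2.1, L.1.2.2.1,
          le_of_le_of_eq (hblkmem L.1).2 (congrArg Subtype.val L.2)⟩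
        invFun := fun L => ⟨⟨L.1, hmemSl L.1 L.2.1 L.2.2.1 L.2.2.2⟩,
          hgval ⟨L.1, hmemSl L.1 L.2.1 L.2.2.1 L.2.2.2⟩ L.2.2.2⟩
        left_inv := fun L => by apply Subtype.ext; apply Subtype.ext; rfl
        right_inv := fun L => rfl }
    rw [Nat.card_congr e, card_lines P B hP hPB, hB3]
    norm_num
  have hcnt := card_fiber_mul g 3 hfib
  have hsubset : {L : Subv v | Module.finrank (ZMod 2) L = 2 ∧ P ≤ L ∧ L ≤ F} ⊆
      {L : Subv v | Module.finrank (ZMod 2) L = 2 ∧ P ≤ L ∧ L ≤ ⊤} := by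
    rintro L ⟨h1, h2, _⟩; exact ⟨h1, h2, le_top⟩
  have hdiff : Sl = {L : Subv v | Module.finrank (ZMod 2) L = 2 ∧ P ≤ L ∧ L ≤ ⊤} \
      {L : Subv v | Module.finrank (ZMod 2) L = 2 ∧ P ≤ L ∧ L ≤ F} := by
    ext L
    simp only [hSl, Set.mem_setOf_eq, Set.mem_diff]
    constructor
    · rintro ⟨h1, h2, h3⟩
      exact ⟨⟨h1, h2, le_top⟩, fun h => h3 h.2.2⟩
    · rintro ⟨⟨h1, h2, _⟩, h4⟩
      exact ⟨h1, h2, fun h => h4 ⟨h1, h2, h⟩⟩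
  have hSlcard : Nat.card ↥Sl = (2 ^ (v - 1) - 1) - (2 ^ (f - 1) - 1) := by
    rw [Nat.card_coe_set_eq, hdiff,
      Set.ncard_diff hsubset (Set.toFinite _),
      ← Nat.card_coe_set_eq, ← Nat.card_coe_set_eq,
      card_lines P ⊤ hP le_top, card_lines P F hP hPF]
    rw [finrank_top, Module.finrank_fin_fun, hFrank]
  rw [hSlcard] at hcnt
  have hple : (2 : ℕ) ^ (f - 1) ≤ 2 ^ (v - 1) := Nat.pow_le_pow_right (by norm_num) (by omega)
  have h1le : (1 : ℕ) ≤ 2 ^ (f - 1) := Nat.one_le_two_pow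
  have hgoal : Nat.card ↥Sb = (2 ^ (v - 1) - 2 ^ (f - 1)) / 3 := by omega
  exact hgoal
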